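/- Let N ≥ 3 and define polynomials P_n by P_0(x)=1, P_1(x)=x, P_2(x)=x²−(N−1), and P_n(x)=x·P_{n−1}(x)−(N−2)·P_{n−2}(x) for n ≥ 3. Then for all n ≥ 0, P_n(x) = (N−2)^{n/2}·[U_n(x/(2√(N−2))) − (1/(N−2))·U_{n−2}(x/(2√(N−2)))], where U_{−1} = U_{−2} = 0. -/

import Mathlib

open Polynomial Polynomial.Chebyshev

/-- Lemma 2.1: the polynomials `P_n` defined by `P_0 = 1`, `P_1 = x`, `P_2 = x² − (N−1)`,
`P_n = x·P_{n−1} − (N−2)·P_{n−2}` satisfy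
`P_n(x) = (N−2)^{n/2}·[U_n(x/(2√(N−2))) − (N−2)⁻¹·U_{n−2}(x/(2√(N−2)))]`,
with the convention `U_{−1} = U_{−2} = 0`. -/
theorem P_eq_chebyshevU (N : ℕ) (hN : 3 ≤ N) (P : ℕ → ℝ → ℝ)
    (hP0 : ∀ x, P 0 x = 1)
    (hP1 : ∀ x, P 1 x = x)
    (hP2 : ∀ x, P 2 x = x ^ 2 - ((N : ℝ) - 1))
    (hPrec : ∀ n, 3 ≤ n → ∀ x, P n x = x * P (n - 1) x - ((N : ℝ) - 2) * P (n - 2) x)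
    (n : ℕ) (x : ℝ) :
    P n x = ((N : ℝ) - 2) ^ ((n : ℝ) / 2) *
      ((U ℝ n).eval (x / (2 * Real.sqrt ((N : ℝ) - 2)))
        - (1 / ((N : ℝ) - 2)) *
          (if 2 ≤ n then (U ℝ ((n : ℤ) - 2)).eval (x / (2 * Real.sqrt ((N : ℝ) - 2))) else 0)) := by
  have hc : (0:ℝ) < (N:ℝ) - 2 := by
    have : (3:ℝ) ≤ (N:ℝ) := by exact_mod_cast hN
    linarith
  set c : ℝ := (N:ℝ) - 2 with hcdef
  set s : ℝ := Real.sqrt c with hsdef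
  have hs : 0 < s := Real.sqrt_pos.mpr hc
  have hs2 : s ^ 2 = c := Real.sq_sqrt hc.le
  set y : ℝ := x / (2*s) with hydef
  have hxy : x = 2*s*y := by rw [hydef]; field_simp
  have hpow : ∀ k : ℕ, c ^ ((k:ℝ)/2) = s^k := by
    intro k
    rw [hsdef, Real.sqrt_eq_rpow, ← Real.rpow_natCast (c ^ ((1:ℝ)/2)) k,
      ← Real.rpow_mul hc.le]
    congr 1
    ring
  have hcne : c ≠ 0 := ne_of_gt hc
  have hU' : ∀ m : ℤ, (U ℝ (m+2)).eval y = 2*y*(U ℝ (m+1)).eval y - (U ℝ m).eval y := by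
    intro m
    rw [U_add_two]
    simp only [eval_mul, eval_sub, eval_ofNat, eval_X]
  have aux : ∀ m : ℕ, P (m+1) x
      = s^(m+1) * ((U ℝ ((m:ℤ)+1)).eval y - (1/c) * (U ℝ ((m:ℤ)-1)).eval y) := by
    intro m
    induction m using Nat.strong_induction_on with
    | _ m ih =>
      match m with
      | 0 =>
        simp only [Nat.cast_zero, zero_add, zero_sub, U_one, U_neg_one, eval_mul, eval_ofNat,
          eval_X, eval_zero, hP1, pow_one, mul_zero, sub_zero]
        rw [hxy]; ring
      | 1 =>
        have h1 : ((1:ℕ):ℤ) + 1 = 2 := by norm_num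
        have h2 : ((1:ℕ):ℤ) - 1 = 0 := by norm_num
        rw [h1, h2, hP2, U_two, U_zero]
        simp only [eval_sub, eval_mul, eval_one, eval_pow, eval_X, eval_ofNat]
        have hN1 : (N:ℝ) - 1 = c + 1 := by rw [hcdef]; ring
        have hx2 : x ^ 2 = 4 * s^2 * y^2 := by rw [hxy]; ring
        rw [hN1, hx2, ← hs2]
        field_simp
        ring
      | (k+2) =>
        have h3 : 3 ≤ k + 3 := by omega
        have hrec := hPrec (k+3) h3 x
        have e1 : k + 3 - 1 = (k+1) + 1 := by omega
        have e2 : k + 3 - 2 = k + 1 := by omega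
        rw [e1, e2] at hrec
        have ih1 := ih (k+1) (by omega)
        have ih2 := ih k (by omega)
        have hE : (U ℝ ((k:ℤ)+3)).eval y
            = 2*y*(U ℝ ((k:ℤ)+2)).eval y - (U ℝ ((k:ℤ)+1)).eval y := by
          have := hU' ((k:ℤ)+1)
          convert this using 3 <;> ring
        have hF : (U ℝ ((k:ℤ)+1)).eval y
            = 2*y*(U ℝ ((k:ℤ))).eval y - (U ℝ ((k:ℤ)-1)).eval y := by
          have := hU' ((k:ℤ)-1)
          convert this using 3 <;> ring
        have hcast1 : (((k+1:ℕ)):ℤ) + 1 = (k:ℤ) + 2 := by push_cast; ring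
        have hcast2 : (((k+1:ℕ)):ℤ) - 1 = (k:ℤ) := by push_cast; ring
        have hcast3 : (((k+2:ℕ)):ℤ) + 1 = (k:ℤ) + 3 := by push_cast; ring
        have hcast4 : (((k+2:ℕ)):ℤ) - 1 = (k:ℤ) + 1 := by push_cast; ring
        rw [hcast1, hcast2] at ih1
        rw [hcast3, hcast4, hrec, ih1, ih2, hxy, hE, hF, ← hs2]
        field_simp
        ring
  cases n with
  | zero =>
    simp only [Nat.cast_zero, zero_div, Real.rpow_zero, one_mul]
    rw [hP0]
    norm_num
  | succ m =>
    rw [aux m, hpow (m+1)]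
    cases m with
    | zero =>
      norm_num [U_neg_one]
    | succ k =>
      have h2 : 2 ≤ k + 1 + 1 := by omega
      rw [if_pos h2]
      have : ((k+1+1:ℕ):ℤ) - 2 = (k:ℤ) := by push_cast; ring
      rw [this]
      have : (((k+1:ℕ)):ℤ) + 1 = ((k+1+1:ℕ):ℤ) := by push_cast; ring
      rw [this]
      have : (((k+1:ℕ)):ℤ) - 1 = (k:ℤ) := by push_cast; ring
      rw [this]
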